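/- For every n ≥ 1 and every integer m ≥ 1, the reduction homomorphism Sp(2n,ℤ) → Sp(2n, ℤ/mℤ) induced by entrywise reduction modulo m is surjective. -/

import Mathlib

open Matrix
set_option linter.unusedSectionVars false

/-- Entrywise reduction of symplectic groups along a ring homomorphism. -/
def sympMap {l : Type*} [DecidableEq l] [Fintype l] {R S : Type*} [CommRing R] [CommRing S]
    (f : R →+* S) : Matrix.symplecticGroup l R →* Matrix.symplecticGroup l S where
  toFun M := ⟨(M : Matrix (l ⊕ l) (l ⊕ l) R).map f, by
    have h := M.2
    rw [SymplecticGroup.mem_iff] at h ⊢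
    have hJ : (Matrix.J l R).map f = Matrix.J l S := by
      ext i j
      cases i <;> cases j <;>
        simp [Matrix.J, Matrix.map_apply, Matrix.one_apply, apply_ite f]
    rw [← hJ, ← Matrix.transpose_map, ← Matrix.map_mul, ← Matrix.map_mul, h]⟩
  map_one' := Subtype.ext (Matrix.map_one _ f.map_zero f.map_one)
  map_mul' M N := Subtype.ext (Matrix.map_mul)

namespace SpAux
variable {l : Type*} [DecidableEq l] [Fintype l] {R : Type*} [CommRing R]

lemma mul_vecMulVec (M : Matrix (l ⊕ l) (l ⊕ l) R) (v w : (l ⊕ l) → R) :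
    M * vecMulVec v w = vecMulVec (M *ᵥ v) w := by
  ext i j
  simp only [mul_apply, vecMulVec_apply, mulVec, dotProduct, Finset.sum_mul]
  exact Finset.sum_congr rfl fun k _ => by ring

lemma vecMulVec_mul (M : Matrix (l ⊕ l) (l ⊕ l) R) (v w : (l ⊕ l) → R) :
    vecMulVec v w * M = vecMulVec v (w ᵥ* M) := by
  ext i j
  simp only [mul_apply, vecMulVec_apply, vecMul, dotProduct, Finset.mul_sum]
  exact Finset.sum_congr rfl fun k _ => by ring

lemma vecMulVec_mulVec (v w x : (l ⊕ l) → R) :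
    vecMulVec v w *ᵥ x = (w ⬝ᵥ x) • v := by
  ext i
  simp only [mulVec, dotProduct, vecMulVec_apply, Pi.smul_apply, smul_eq_mul, Finset.sum_mul]
  exact Finset.sum_congr rfl fun k _ => by ring

lemma vecMulVec_transpose (v w : (l ⊕ l) → R) :
    (vecMulVec v w)ᵀ = vecMulVec w v := by
  ext i j; simp [vecMulVec_apply, mul_comm]

/-- The symplectic form. -/
def omg (u v : (l ⊕ l) → R) : R :=
  ∑ j, (u (Sum.inr j) * v (Sum.inl j) - u (Sum.inl j) * v (Sum.inr j))

lemma omg_eq_dot (u v : (l ⊕ l) → R) : omg u v = u ⬝ᵥ (Matrix.J l R *ᵥ v) := by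
  simp only [omg, J, dotProduct, mulVec, Fintype.sum_sum_type, fromBlocks_apply₁₁,
    fromBlocks_apply₁₂, fromBlocks_apply₂₁, fromBlocks_apply₂₂, Matrix.zero_apply, Matrix.neg_apply, one_apply,
    dotProduct, ite_mul, one_mul, zero_mul, mul_ite, mul_one, mul_zero, mul_neg, neg_mul,
    Finset.sum_ite_eq, Finset.sum_ite_eq', Finset.mem_univ, if_true,
    Finset.sum_neg_distrib, zero_add, add_zero, Finset.sum_sub_distrib, Finset.sum_add_distrib]
  simp only [Finset.sum_const_zero, zero_add, add_zero, mul_neg]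
  rw [Finset.sum_neg_distrib]
  abel

lemma omg_self (v : (l ⊕ l) → R) : omg v v = 0 := by
  simp [omg, mul_comm]

lemma omg_skew (u v : (l ⊕ l) → R) : omg u v = -omg v u := by
  simp only [omg, ← Finset.sum_neg_distrib]
  exact Finset.sum_congr rfl fun k _ => by ring

lemma omg_add_left (u u' v : (l ⊕ l) → R) : omg (u + u') v = omg u v + omg u' v := by
  simp only [omg, Pi.add_apply, ← Finset.sum_add_distrib]
  exact Finset.sum_congr rfl fun k _ => by ring

lemma omg_add_right (u v v' : (l ⊕ l) → R) : omg u (v + v') = omg u v + omg u v' := by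
  simp only [omg, Pi.add_apply, ← Finset.sum_add_distrib]
  exact Finset.sum_congr rfl fun k _ => by ring

lemma omg_sub_left (u u' v : (l ⊕ l) → R) : omg (u - u') v = omg u v - omg u' v := by
  simp only [omg, Pi.sub_apply, ← Finset.sum_sub_distrib]
  exact Finset.sum_congr rfl fun k _ => by ring

lemma omg_sub_right (u v v' : (l ⊕ l) → R) : omg u (v - v') = omg u v - omg u v' := by
  simp only [omg, Pi.sub_apply, ← Finset.sum_sub_distrib]
  exact Finset.sum_congr rfl fun k _ => by ring

lemma omg_single_inl_left (i : l) (x : (l ⊕ l) → R) :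
    omg (Pi.single (Sum.inl i) 1) x = -x (Sum.inr i) := by
  simp [omg, Pi.single_apply, Finset.sum_ite_eq]

lemma omg_single_inr_left (i : l) (x : (l ⊕ l) → R) :
    omg (Pi.single (Sum.inr i) 1) x = x (Sum.inl i) := by
  simp [omg, Pi.single_apply, Finset.sum_ite_eq]

lemma omg_single_inl_right (i : l) (x : (l ⊕ l) → R) :
    omg x (Pi.single (Sum.inl i) 1) = x (Sum.inr i) := by
  simp [omg, Pi.single_apply, Finset.sum_ite_eq]

lemma omg_single_inr_right (i : l) (x : (l ⊕ l) → R) :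
    omg x (Pi.single (Sum.inr i) 1) = -x (Sum.inl i) := by
  simp [omg, Pi.single_apply, Finset.sum_ite_eq]

/-- Symplectic transvection matrix. -/
def tv (v : (l ⊕ l) → R) (c : R) : Matrix (l ⊕ l) (l ⊕ l) R :=
  1 + c • vecMulVec v (v ᵥ* Matrix.J l R)

lemma vecMul_J_dot (v x : (l ⊕ l) → R) : (v ᵥ* Matrix.J l R) ⬝ᵥ x = omg v x := by
  rw [omg_eq_dot, dotProduct_mulVec]

lemma J_mulVec (v : (l ⊕ l) → R) : Matrix.J l R *ᵥ v = -(v ᵥ* Matrix.J l R) := by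
  calc Matrix.J l R *ᵥ v = ((Matrix.J l R)ᵀ)ᵀ *ᵥ v := by rw [transpose_transpose]
  _ = v ᵥ* (Matrix.J l R)ᵀ := mulVec_transpose _ _
  _ = -(v ᵥ* Matrix.J l R) := by rw [J_transpose, Matrix.vecMul_neg]

lemma tv_mulVec (v : (l ⊕ l) → R) (c : R) (x : (l ⊕ l) → R) :
    tv v c *ᵥ x = x + (c * omg v x) • v := by
  rw [tv, add_mulVec, one_mulVec, smul_mulVec, vecMulVec_mulVec, vecMul_J_dot, smul_smul]

lemma tv_zero (v : (l ⊕ l) → R) : tv v 0 = 1 := by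
  simp [tv]

lemma tv_mem (v : (l ⊕ l) → R) (c : R) : tv v c ∈ Matrix.symplecticGroup l R := by
  rw [SymplecticGroup.mem_iff']
  set w := v ᵥ* Matrix.J l R with hw
  have hwv : w ⬝ᵥ v = 0 := by rw [vecMul_J_dot, omg_self]
  have h1 : Matrix.J l R * vecMulVec v w = -vecMulVec w w := by
    rw [mul_vecMulVec, J_mulVec, ← hw]
    ext i j; simp [vecMulVec_apply]
  have h2 : vecMulVec w v * Matrix.J l R = vecMulVec w w := by
    rw [vecMulVec_mul, ← hw]
  have h3 : (tv v c)ᵀ = 1 + c • vecMulVec w v := by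
    rw [tv, transpose_add, transpose_one, transpose_smul, vecMulVec_transpose]
  have h4 : vecMulVec w w * vecMulVec v w = 0 := by
    rw [mul_vecMulVec, vecMulVec_mulVec, hwv, zero_smul]
    ext i j; simp [vecMulVec_apply]
  rw [h3, tv]
  rw [Matrix.add_mul, Matrix.one_mul, Matrix.add_mul, Matrix.mul_add, Matrix.mul_add,
    Matrix.smul_mul, Matrix.smul_mul, Matrix.mul_smul, Matrix.mul_smul, h1, h2]
  rw [← hw, Matrix.smul_mul, h4]
  simp only [Matrix.mul_one, smul_neg, smul_zero, add_zero]
  abel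

/-- Symplectic transvection as a group element. -/
def sympTv (v : (l ⊕ l) → R) (c : R) : Matrix.symplecticGroup l R := ⟨tv v c, tv_mem v c⟩

lemma sympTv_zero (v : (l ⊕ l) → R) : sympTv v 0 = 1 := Subtype.ext (tv_zero v)

variable (l R) in
/-- The set of symplectic transvections. -/
def TvSet : Set (Matrix.symplecticGroup l R) := Set.range fun p : ((l ⊕ l) → R) × R => sympTv p.1 p.2

lemma sympTv_mem_TvSet (v : (l ⊕ l) → R) (c : R) : sympTv v c ∈ TvSet l R := ⟨(v, c), rfl⟩

lemma omg_invariant (M : Matrix.symplecticGroup l R) (x y : (l ⊕ l) → R) :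
    omg ((M : Matrix (l ⊕ l) (l ⊕ l) R) *ᵥ x) ((M : Matrix (l ⊕ l) (l ⊕ l) R) *ᵥ y) = omg x y := by
  have hM := M.2
  rw [SymplecticGroup.mem_iff'] at hM
  rw [omg_eq_dot, omg_eq_dot]
  calc ((M : Matrix (l ⊕ l) (l ⊕ l) R) *ᵥ x) ⬝ᵥ (Matrix.J l R *ᵥ ((M : Matrix (l ⊕ l) (l ⊕ l) R) *ᵥ y))
      = (x ᵥ* (M : Matrix (l ⊕ l) (l ⊕ l) R)ᵀ) ⬝ᵥ ((Matrix.J l R * (M : Matrix (l ⊕ l) (l ⊕ l) R)) *ᵥ y) := by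
        rw [mulVec_mulVec, ← mulVec_transpose, transpose_transpose]
    _ = (x ᵥ* ((M : Matrix (l ⊕ l) (l ⊕ l) R)ᵀ * (Matrix.J l R * (M : Matrix (l ⊕ l) (l ⊕ l) R)))) ⬝ᵥ y := by
        rw [dotProduct_mulVec, vecMul_vecMul]
    _ = x ⬝ᵥ (Matrix.J l R *ᵥ y) := by
        rw [← Matrix.mul_assoc, hM, ← dotProduct_mulVec]

lemma coe_inv_mul (M : Matrix.symplecticGroup l R) :
    ((M⁻¹ : Matrix.symplecticGroup l R) : Matrix (l ⊕ l) (l ⊕ l) R) * (M : Matrix (l ⊕ l) (l ⊕ l) R) = 1 := by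
  have := inv_mul_cancel M
  exact congrArg Subtype.val this

lemma exists_dot_one (M : Matrix.symplecticGroup l R) (a : l ⊕ l) :
    ∃ w : (l ⊕ l) → R, w ⬝ᵥ ((M : Matrix (l ⊕ l) (l ⊕ l) R) *ᵥ Pi.single a 1) = 1 := by
  refine ⟨fun b => ((M⁻¹ : Matrix.symplecticGroup l R) : Matrix (l ⊕ l) (l ⊕ l) R) a b, ?_⟩
  have : ((M⁻¹ : Matrix.symplecticGroup l R) : Matrix (l ⊕ l) (l ⊕ l) R) *ᵥ
      ((M : Matrix (l ⊕ l) (l ⊕ l) R) *ᵥ Pi.single a 1) = Pi.single a 1 := by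
    rw [mulVec_mulVec, coe_inv_mul, one_mulVec]
  have h2 := congrFun this a
  simpa [mulVec, Pi.single_apply] using h2

lemma hloc' (hloc : ∀ a b : R, IsUnit (a + b) → IsUnit a ∨ IsUnit b) {a b : R}
    (ha : IsUnit a) (hb : ¬IsUnit b) : IsUnit (a + b) := by
  by_contra h
  have : a = (a + b) + (-b) := by ring
  rcases hloc (a + b) (-b) (this ▸ ha) with h1 | h2
  · exact h h1
  · exact hb (IsUnit.neg_iff b |>.mp h2)

lemma exists_unit_coord [Nontrivial R] (hloc : ∀ a b : R, IsUnit (a + b) → IsUnit a ∨ IsUnit b)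
    (w u : (l ⊕ l) → R) (h : w ⬝ᵥ u = 1) : ∃ a, IsUnit (u a) := by
  have key : ∀ t : Finset (l ⊕ l), IsUnit (∑ a ∈ t, w a * u a) → ∃ a ∈ t, IsUnit (u a) := by
    intro t
    induction t using Finset.induction_on with
    | empty => intro h'; simp only [Finset.sum_empty, isUnit_zero_iff] at h'
               exact absurd h' zero_ne_one
    | insert a t' hni ih =>
        rw [Finset.sum_insert hni]
        intro h'
        rcases hloc _ _ h' with h1 | h2
        · exact ⟨a, Finset.mem_insert_self _ _, isUnit_of_mul_isUnit_right h1⟩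
        · obtain ⟨b, hb, hub⟩ := ih h2
          exact ⟨b, Finset.mem_insert_of_mem hb, hub⟩
  have : IsUnit (∑ a, w a * u a) := by rw [← dotProduct, h]; exact isUnit_one
  obtain ⟨a, _, ha⟩ := key Finset.univ this
  exact ⟨a, ha⟩

lemma exists_tv_map (u t : (l ⊕ l) → R) (h : IsUnit (omg u t)) :
    ∃ c, tv (t - u) c *ᵥ u = t := by
  refine ⟨-((h.unit⁻¹ : Rˣ) : R), ?_⟩
  rw [tv_mulVec, omg_sub_left, omg_self, sub_zero, omg_skew t u]
  have h1 : -((h.unit⁻¹ : Rˣ) : R) * -omg u t = 1 := by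
    rw [neg_mul_neg]
    exact h.val_inv_mul
  rw [h1, one_smul, add_sub_cancel]

lemma tv_fix (v : (l ⊕ l) → R) (c : R) (x : (l ⊕ l) → R) (h : omg v x = 0) :
    tv v c *ᵥ x = x := by
  rw [tv_mulVec, h, mul_zero, zero_smul, add_zero]

lemma omg_zero_left (x : (l ⊕ l) → R) : omg 0 x = 0 := by simp [omg]

variable (R) in
/-- supported inside `s` -/
def Spt (s : Finset l) (x : (l ⊕ l) → R) : Prop :=
  ∀ j ∉ s, x (Sum.inl j) = 0 ∧ x (Sum.inr j) = 0

lemma Spt.sub {s : Finset l} {x y : (l ⊕ l) → R} (hx : Spt R s x) (hy : Spt R s y) :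
    Spt R s (x - y) := fun j hj => by
  simp [(hx j hj).1, (hx j hj).2, (hy j hj).1, (hy j hj).2]

lemma Spt.add {s : Finset l} {x y : (l ⊕ l) → R} (hx : Spt R s x) (hy : Spt R s y) :
    Spt R s (x + y) := fun j hj => by
  simp [(hx j hj).1, (hx j hj).2, (hy j hj).1, (hy j hj).2]

lemma Spt.zero {s : Finset l} : Spt R s 0 := fun _ _ => ⟨rfl, rfl⟩

lemma spt_single_inl {s : Finset l} {j : l} (hj : j ∈ s) :
    Spt R s (Pi.single (Sum.inl j) (1 : R)) := by
  intro k hk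
  have hkj : k ≠ j := fun h => hk (h ▸ hj)
  constructor <;> simp [Pi.single_apply, hkj]

lemma spt_single_inr {s : Finset l} {j : l} (hj : j ∈ s) :
    Spt R s (Pi.single (Sum.inr j) (1 : R)) := by
  intro k hk
  have hkj : k ≠ j := fun h => hk (h ▸ hj)
  constructor <;> simp [Pi.single_apply, hkj]

lemma tv_fix_outside {s : Finset l} {v : (l ⊕ l) → R} (hv : Spt R s v) (c : R)
    {j : l} (hj : j ∉ s) :
    tv v c *ᵥ Pi.single (Sum.inl j) 1 = Pi.single (Sum.inl j) (1 : R) ∧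
    tv v c *ᵥ Pi.single (Sum.inr j) 1 = Pi.single (Sum.inr j) (1 : R) := by
  constructor
  · exact tv_fix _ _ _ (by rw [omg_single_inl_right]; exact (hv j hj).2)
  · exact tv_fix _ _ _ (by rw [omg_single_inr_right, (hv j hj).1, neg_zero])

lemma step [Nontrivial R] (hloc : ∀ a b : R, IsUnit (a + b) → IsUnit a ∨ IsUnit b)
    (s : Finset l) (i : l) (hi : i ∈ s) (M : Matrix.symplecticGroup l R)
    (hM : ∀ j ∉ s,
      (M : Matrix (l ⊕ l) (l ⊕ l) R) *ᵥ Pi.single (Sum.inl j) 1 = Pi.single (Sum.inl j) 1 ∧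
      (M : Matrix (l ⊕ l) (l ⊕ l) R) *ᵥ Pi.single (Sum.inr j) 1 = Pi.single (Sum.inr j) 1) :
    ∃ G : Matrix.symplecticGroup l R, G ∈ Subgroup.closure (TvSet l R) ∧
      ∀ j ∉ s.erase i,
        ((G * M : Matrix.symplecticGroup l R) : Matrix (l ⊕ l) (l ⊕ l) R) *ᵥ
            Pi.single (Sum.inl j) 1 = Pi.single (Sum.inl j) 1 ∧
        ((G * M : Matrix.symplecticGroup l R) : Matrix (l ⊕ l) (l ⊕ l) R) *ᵥ
            Pi.single (Sum.inr j) 1 = Pi.single (Sum.inr j) 1 := by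
  classical
  set ei : (l ⊕ l) → R := Pi.single (Sum.inl i) 1 with hei
  set fi : (l ⊕ l) → R := Pi.single (Sum.inr i) 1 with hfi
  set u := (M : Matrix (l ⊕ l) (l ⊕ l) R) *ᵥ ei with hu
  obtain ⟨w, hw⟩ := exists_dot_one M (Sum.inl i)
  have hsptu : Spt R s u := by
    intro j hj
    have hji : j ≠ i := fun h => hj (h ▸ hi)
    constructor
    · have h1 : omg (Pi.single (Sum.inr j) 1) u = u (Sum.inl j) := omg_single_inr_left j u
      rw [← h1, hu, ← (hM j hj).2, omg_invariant, omg_single_inr_left, hei,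
        Pi.single_apply]
      simp [hji]
    · have h1 : omg (Pi.single (Sum.inl j) 1) u = -u (Sum.inr j) := omg_single_inl_left j u
      have h2 : omg (Pi.single (Sum.inl j) 1) u = 0 := by
        rw [hu, ← (hM j hj).1, omg_invariant, omg_single_inl_left, hei, Pi.single_apply]
        simp
      rw [h2] at h1
      exact (neg_eq_zero.mp h1.symm)
  obtain ⟨a, ha⟩ := exists_unit_coord hloc w u hw
  -- a z₁ with unit pairing against u, supported in s
  obtain ⟨z₁, hz₁u, hz₁s⟩ : ∃ z₁, IsUnit (omg u z₁) ∧ Spt R s z₁ := by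
    have hne : u a ≠ 0 := ha.ne_zero
    rcases a with j | j
    · have hjs : j ∈ s := by
        by_contra hjs
        exact hne (hsptu j hjs).1
      exact ⟨Pi.single (Sum.inr j) 1, by rw [omg_single_inr_right]; exact ha.neg,
        spt_single_inr hjs⟩
    · have hjs : j ∈ s := by
        by_contra hjs
        exact hne (hsptu j hjs).2
      exact ⟨Pi.single (Sum.inl j) 1, by rw [omg_single_inl_right]; exact ha,
        spt_single_inl hjs⟩
  have hfiei : omg fi ei = 1 := by
    rw [hfi, hei, omg_single_inr_left, Pi.single_eq_same]
  have heifi : omg ei fi = -1 := by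
    rw [hfi, hei, omg_single_inl_left, Pi.single_eq_same]
  obtain ⟨z, hz1, hz2, hz3⟩ : ∃ z, IsUnit (omg u z) ∧ IsUnit (omg z ei) ∧ Spt R s z := by
    by_cases hA : IsUnit (omg z₁ ei)
    · exact ⟨z₁, hz₁u, hA, hz₁s⟩
    by_cases hB : IsUnit (omg u fi)
    · exact ⟨fi, hB, by rw [hfiei]; exact isUnit_one, spt_single_inr hi⟩
    · refine ⟨z₁ + fi, ?_, ?_, Spt.add hz₁s (spt_single_inr hi)⟩
      · rw [omg_add_right]; exact hloc' hloc hz₁u hB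
      · rw [omg_add_left, add_comm]
        exact hloc' hloc (by rw [hfiei]; exact isUnit_one) hA
  obtain ⟨c₁, hc₁⟩ := exists_tv_map u z hz1
  obtain ⟨c₂, hc₂⟩ := exists_tv_map z ei hz2
  set M' := sympTv (ei - z) c₂ * (sympTv (z - u) c₁ * M) with hM'
  have hcoeM' : (M' : Matrix (l ⊕ l) (l ⊕ l) R) =
      tv (ei - z) c₂ * (tv (z - u) c₁ * (M : Matrix (l ⊕ l) (l ⊕ l) R)) := rfl
  have hM'vec : ∀ x, (M' : Matrix (l ⊕ l) (l ⊕ l) R) *ᵥ x =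
      tv (ei - z) c₂ *ᵥ (tv (z - u) c₁ *ᵥ ((M : Matrix (l ⊕ l) (l ⊕ l) R) *ᵥ x)) := by
    intro x; rw [hcoeM', mulVec_mulVec, mulVec_mulVec, Matrix.mul_assoc]
  have h1 : (M' : Matrix (l ⊕ l) (l ⊕ l) R) *ᵥ ei = ei := by
    rw [hM'vec, ← hu, hc₁, hc₂]
  have hfixM' : ∀ j ∉ s,
      (M' : Matrix (l ⊕ l) (l ⊕ l) R) *ᵥ Pi.single (Sum.inl j) 1 = Pi.single (Sum.inl j) 1 ∧
      (M' : Matrix (l ⊕ l) (l ⊕ l) R) *ᵥ Pi.single (Sum.inr j) 1 = Pi.single (Sum.inr j) 1 := by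
    intro j hj
    have hA := tv_fix_outside (Spt.sub hz3 hsptu) c₁ hj
    have hB := tv_fix_outside (Spt.sub (spt_single_inl hi) hz3) c₂ hj
    constructor
    · rw [hM'vec, (hM j hj).1, hA.1, hB.1]
    · rw [hM'vec, (hM j hj).2, hA.2, hB.2]
  set f := (M' : Matrix (l ⊕ l) (l ⊕ l) R) *ᵥ fi with hf
  have hsptf : Spt R s f := by
    intro j hj
    have hji : j ≠ i := fun h => hj (h ▸ hi)
    constructor
    · have h1' : omg (Pi.single (Sum.inr j) 1) f = f (Sum.inl j) := omg_single_inr_left j f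
      rw [← h1', hf, ← (hfixM' j hj).2, omg_invariant, omg_single_inr_left, hfi,
        Pi.single_apply]
      simp
    · have h1' : omg (Pi.single (Sum.inl j) 1) f = -f (Sum.inr j) := omg_single_inl_left j f
      have h2' : omg (Pi.single (Sum.inl j) 1) f = 0 := by
        rw [hf, ← (hfixM' j hj).1, omg_invariant, omg_single_inl_left, hfi, Pi.single_apply]
        simp [hji]
      rw [h2'] at h1'
      exact (neg_eq_zero.mp h1'.symm)
  have hfinri : f (Sum.inr i) = 1 := by
    have homg : omg ei f = -1 := by
      rw [hf, ← h1, omg_invariant, heifi]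
    rw [hei, omg_single_inl_left] at homg
    have := neg_injective homg
    rw [this]
  have hfei : omg f ei = 1 := by
    rw [hei, omg_single_inl_right, hfinri]
  obtain ⟨v₃, c₃, v₄, c₄, hs₃, hs₄, he₃, he₄, hmap⟩ :
      ∃ v₃ c₃ v₄ c₄, Spt R s v₃ ∧ Spt R s v₄ ∧ omg v₃ ei = 0 ∧ omg v₄ ei = 0 ∧
        tv v₄ c₄ *ᵥ (tv v₃ c₃ *ᵥ f) = fi := by
    by_cases hcase : IsUnit (omg f fi)
    · obtain ⟨c₃, hc₃⟩ := exists_tv_map f fi hcase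
      refine ⟨fi - f, c₃, 0, 0, Spt.sub (spt_single_inr hi) hsptf, Spt.zero, ?_, ?_, ?_⟩
      · rw [omg_sub_left, hfiei, hfei, sub_self]
      · exact omg_zero_left ei
      · rw [hc₃, tv_zero, one_mulVec]
    · set g := f + ei with hg
      have hfg : omg f g = 1 := by
        rw [hg, omg_add_right, omg_self, hfei, zero_add]
      obtain ⟨c₃, hc₃⟩ := exists_tv_map f g (by rw [hfg]; exact isUnit_one)
      have hgf : g - f = ei := by rw [hg, add_sub_cancel_left]
      have hginri : g (Sum.inr i) = 1 := by
        rw [hg, Pi.add_apply, hfinri, hei, Pi.single_apply]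
        simp
      have hgfi : IsUnit (omg g fi) := by
        rw [hg, omg_add_left, heifi, add_comm]
        exact hloc' hloc (by exact isUnit_one.neg) hcase
      obtain ⟨c₄, hc₄⟩ := exists_tv_map g fi hgfi
      refine ⟨ei, c₃, fi - g, c₄, spt_single_inl hi,
        Spt.sub (spt_single_inr hi) (Spt.add hsptf (spt_single_inl hi)), omg_self ei, ?_, ?_⟩
      · rw [omg_sub_left, hfiei, hei, omg_single_inl_right, hginri, sub_self]
      · rw [← hgf, hc₃, hc₄]
  refine ⟨sympTv v₄ c₄ * sympTv v₃ c₃ * sympTv (ei - z) c₂ * sympTv (z - u) c₁, ?_, ?_⟩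
  · exact mul_mem (mul_mem (mul_mem
      (Subgroup.subset_closure (sympTv_mem_TvSet _ _))
      (Subgroup.subset_closure (sympTv_mem_TvSet _ _)))
      (Subgroup.subset_closure (sympTv_mem_TvSet _ _)))
      (Subgroup.subset_closure (sympTv_mem_TvSet _ _))
  · intro j hj
    have hGM : sympTv v₄ c₄ * sympTv v₃ c₃ * sympTv (ei - z) c₂ * sympTv (z - u) c₁ * M =
        sympTv v₄ c₄ * (sympTv v₃ c₃ * M') := by
      rw [hM']; group
    rw [hGM]
    have hvec : ∀ x, ((sympTv v₄ c₄ * (sympTv v₃ c₃ * M') :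
        Matrix.symplecticGroup l R) : Matrix (l ⊕ l) (l ⊕ l) R) *ᵥ x =
        tv v₄ c₄ *ᵥ (tv v₃ c₃ *ᵥ ((M' : Matrix (l ⊕ l) (l ⊕ l) R) *ᵥ x)) := by
      intro x
      have : ((sympTv v₄ c₄ * (sympTv v₃ c₃ * M') :
          Matrix.symplecticGroup l R) : Matrix (l ⊕ l) (l ⊕ l) R) =
          tv v₄ c₄ * (tv v₃ c₃ * (M' : Matrix (l ⊕ l) (l ⊕ l) R)) := rfl
      rw [this, mulVec_mulVec, mulVec_mulVec, Matrix.mul_assoc]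
    by_cases hji : j = i
    · subst hji
      constructor
      · rw [hvec, h1, tv_fix _ _ _ he₃, tv_fix _ _ _ he₄]
      · rw [hvec, ← hf, hmap]
    · have hjs : j ∉ s := fun hjs => hj (Finset.mem_erase.mpr ⟨hji, hjs⟩)
      constructor
      · rw [hvec, (hfixM' j hjs).1, (tv_fix_outside hs₃ c₃ hjs).1, (tv_fix_outside hs₄ c₄ hjs).1]
      · rw [hvec, (hfixM' j hjs).2, (tv_fix_outside hs₃ c₃ hjs).2, (tv_fix_outside hs₄ c₄ hjs).2]
theorem gen_aux (hloc : ∀ a b : R, IsUnit (a + b) → IsUnit a ∨ IsUnit b) (s : Finset l) :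
    ∀ M : Matrix.symplecticGroup l R,
      (∀ j ∉ s,
        (M : Matrix (l ⊕ l) (l ⊕ l) R) *ᵥ Pi.single (Sum.inl j) 1 = Pi.single (Sum.inl j) 1 ∧
        (M : Matrix (l ⊕ l) (l ⊕ l) R) *ᵥ Pi.single (Sum.inr j) 1 = Pi.single (Sum.inr j) 1) →
      M ∈ Subgroup.closure (TvSet l R) := by
  classical
  induction s using Finset.strongInduction with
  | _ s ih =>
    intro M hM
    rcases subsingleton_or_nontrivial R with hR | hR
    · have : M = 1 := Subtype.ext (Subsingleton.elim _ _)
      rw [this]; exact one_mem _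
    · rcases s.eq_empty_or_nonempty with rfl | ⟨i, hi⟩
      · have hMone : M = 1 := by
          apply Subtype.ext
          ext a b
          rcases b with j | j
          · have h := congrFun (hM j (Finset.notMem_empty j)).1 a
            simpa [Matrix.one_apply, Pi.single_apply] using h
          · have h := congrFun (hM j (Finset.notMem_empty j)).2 a
            simpa [Matrix.one_apply, Pi.single_apply] using h
        rw [hMone]; exact one_mem _
      · obtain ⟨G, hG, hfix⟩ := step hloc s i hi M hM
        have hmem := ih (s.erase i) (Finset.erase_ssubset hi) (G * M) hfix
        have hMeq : M = G⁻¹ * (G * M) := by group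
        rw [hMeq]
        exact mul_mem (inv_mem hG) hmem

theorem gen_of_loc (hloc : ∀ a b : R, IsUnit (a + b) → IsUnit a ∨ IsUnit b)
    (M : Matrix.symplecticGroup l R) : M ∈ Subgroup.closure (TvSet l R) :=
  gen_aux hloc Finset.univ M (fun j hj => absurd (Finset.mem_univ j) hj)

lemma zmod_hloc (p k : ℕ) (hp : p.Prime) (hk : 0 < k) :
    ∀ a b : ZMod (p ^ k), IsUnit (a + b) → IsUnit a ∨ IsUnit b := by
  haveI : NeZero (p ^ k) := ⟨pow_ne_zero k hp.pos.ne'⟩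
  have hdvd : ∀ x : ZMod (p ^ k), ¬IsUnit x → ((p : ℕ) : ZMod (p ^ k)) ∣ x := by
    intro x hx
    have hxv : ((x.val : ℕ) : ZMod (p ^ k)) = x := ZMod.natCast_rightInverse x
    have hcop : ¬ Nat.Coprime x.val (p ^ k) := by
      intro hc
      exact hx (by rw [← hxv]; exact (ZMod.isUnit_iff_coprime _ _).mpr hc)
    have hpdvd : p ∣ x.val := by
      by_contra hnd
      exact hcop (Nat.Coprime.pow_right k ((Nat.Prime.coprime_iff_not_dvd hp).mpr hnd).symm)
    obtain ⟨t, ht⟩ := hpdvd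
    exact ⟨(t : ZMod (p ^ k)), by rw [← hxv, ht]; push_cast; ring⟩
  have hpnu : ¬IsUnit ((p : ℕ) : ZMod (p ^ k)) := by
    rw [ZMod.isUnit_iff_coprime]
    intro hc
    exact hp.one_lt.ne' (Nat.Coprime.eq_one_of_dvd hc (dvd_pow_self p hk.ne'))
  intro a b hab
  by_contra hcon
  push_neg at hcon
  obtain ⟨da, hda⟩ := hdvd a hcon.1
  obtain ⟨db, hdb⟩ := hdvd b hcon.2
  have : ((p : ℕ) : ZMod (p ^ k)) ∣ (a + b) := ⟨da + db, by rw [hda, hdb]; ring⟩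
  obtain ⟨c, hc⟩ := this
  rw [hc] at hab
  exact hpnu (isUnit_of_mul_isUnit_left hab)

section Maps
variable {S S' : Type*} [CommRing S] [CommRing S']

lemma J_map (f : R →+* S) : (Matrix.J l R).map f = Matrix.J l S := by
  ext a b
  cases a <;> cases b <;>
    simp [Matrix.J, Matrix.map_apply, Matrix.one_apply, apply_ite f]

lemma J_map_apply (f : R →+* S) (a b : l ⊕ l) :
    f (Matrix.J l R a b) = Matrix.J l S a b := by
  have := congrFun (congrFun (J_map (l := l) f) a) b
  simpa [Matrix.map_apply] using this

lemma tv_map (f : R →+* S) (v : (l ⊕ l) → R) (c : R) :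
    (tv v c).map f = tv (fun a => f (v a)) (f c) := by
  ext a b
  simp only [tv, Matrix.map_apply, Matrix.add_apply, Matrix.smul_apply, vecMulVec_apply,
    Matrix.one_apply, vecMul, dotProduct, smul_eq_mul, _root_.map_add, _root_.map_mul,
    _root_.map_sum, apply_ite f, _root_.map_one, _root_.map_zero, J_map_apply f]

lemma sympMap_coe (f : R →+* S) (M : Matrix.symplecticGroup l R) :
    ((sympMap f M : Matrix.symplecticGroup l S) : Matrix (l ⊕ l) (l ⊕ l) S) =
      (M : Matrix (l ⊕ l) (l ⊕ l) R).map f := rfl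

lemma sympMap_sympTv (f : R →+* S) (v : (l ⊕ l) → R) (c : R) :
    sympMap f (sympTv v c) = sympTv (fun a => f (v a)) (f c) :=
  Subtype.ext (tv_map f v c)

lemma closure_lift (f : R →+* S) (g : R →+* S')
    (hsurj : ∀ x : S, ∃ r : R, f r = x ∧ g r = 0) (N : Matrix.symplecticGroup l S)
    (hN : N ∈ Subgroup.closure (TvSet l S)) :
    ∃ P ∈ Subgroup.closure (TvSet l R), sympMap f P = N ∧ sympMap g P = 1 := by
  induction hN using Subgroup.closure_induction with
  | mem x hx =>
      obtain ⟨⟨v, c⟩, rfl⟩ := hx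
      have hv := fun a => hsurj (v a)
      choose vt hv1 hv2 using hv
      obtain ⟨c', hc1, hc2⟩ := hsurj c
      refine ⟨sympTv vt c', Subgroup.subset_closure (sympTv_mem_TvSet _ _), ?_, ?_⟩
      · rw [sympMap_sympTv]
        have hfv : (fun a => f (vt a)) = v := funext hv1
        rw [hfv, hc1]
      · rw [sympMap_sympTv, hc2]
        have : (sympTv (fun a => g (vt a)) (0 : S') : Matrix.symplecticGroup l S') = 1 :=
          sympTv_zero _
        exact this
  | one => exact ⟨1, one_mem _, _root_.map_one _, _root_.map_one _⟩
  | mul x y hx hy ihx ihy =>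
      obtain ⟨P, hP, hP1, hP2⟩ := ihx
      obtain ⟨Q, hQ, hQ1, hQ2⟩ := ihy
      exact ⟨P * Q, mul_mem hP hQ, by rw [_root_.map_mul, hP1, hQ1], by rw [_root_.map_mul, hP2, hQ2, one_mul]⟩
  | inv x hx ihx =>
      obtain ⟨P, hP, hP1, hP2⟩ := ihx
      exact ⟨P⁻¹, inv_mem hP, by rw [_root_.map_inv, hP1], by rw [_root_.map_inv, hP2, inv_one]⟩

end Maps

section CRT
variable {a b : ℕ}

lemma crt_pair_surj (ha : 0 < a) (hb : 0 < b) (hab : Nat.Coprime a b)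
    (r : ZMod a) (t : ZMod b) :
    ∃ x : ZMod (a * b), ZMod.castHom (dvd_mul_right a b) (ZMod a) x = r ∧
      ZMod.castHom (dvd_mul_left b a) (ZMod b) x = t := by
  haveI : NeZero a := ⟨ha.ne'⟩
  haveI : NeZero b := ⟨hb.ne'⟩
  obtain ⟨n, h1, h2⟩ := Nat.chineseRemainder hab r.val t.val
  refine ⟨(n : ZMod (a * b)), ?_, ?_⟩
  · rw [map_natCast, (ZMod.natCast_eq_natCast_iff _ _ _).mpr h1]
    exact ZMod.natCast_rightInverse r
  · rw [map_natCast, (ZMod.natCast_eq_natCast_iff _ _ _).mpr h2]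
    exact ZMod.natCast_rightInverse t

lemma crt_inj (ha : 0 < a) (hb : 0 < b) (hab : Nat.Coprime a b) (x y : ZMod (a * b))
    (h1 : ZMod.castHom (dvd_mul_right a b) (ZMod a) x = ZMod.castHom (dvd_mul_right a b) (ZMod a) y)
    (h2 : ZMod.castHom (dvd_mul_left b a) (ZMod b) x = ZMod.castHom (dvd_mul_left b a) (ZMod b) y) :
    x = y := by
  haveI : NeZero (a * b) := ⟨(Nat.mul_pos ha hb).ne'⟩
  set d := x - y with hd
  have hda : ZMod.castHom (dvd_mul_right a b) (ZMod a) d = 0 := by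
    rw [hd, map_sub, h1, sub_self]
  have hdb : ZMod.castHom (dvd_mul_left b a) (ZMod b) d = 0 := by
    rw [hd, map_sub, h2, sub_self]
  have hdv : ((d.val : ℕ) : ZMod (a * b)) = d := ZMod.natCast_rightInverse d
  have hdva : a ∣ d.val := by
    rw [← hdv, map_natCast] at hda
    exact (ZMod.natCast_eq_zero_iff _ _).mp hda
  have hdvb : b ∣ d.val := by
    rw [← hdv, map_natCast] at hdb
    exact (ZMod.natCast_eq_zero_iff _ _).mp hdb
  have : (a * b) ∣ d.val := Nat.Coprime.mul_dvd_of_dvd_of_dvd hab hdva hdvb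
  have hz : d.val = 0 := Nat.eq_zero_of_dvd_of_lt this (ZMod.val_lt d)
  have hd0 : d = 0 := by rw [← hdv, hz, Nat.cast_zero]
  exact sub_eq_zero.mp hd0

end CRT

theorem gen_zmod : ∀ m : ℕ, 0 < m → ∀ M : Matrix.symplecticGroup l (ZMod m),
    M ∈ Subgroup.closure (TvSet l (ZMod m)) := by
  intro m
  induction m using Nat.recOnPosPrimePosCoprime with
  | prime_pow p k hpp hk =>
      intro _ M
      exact gen_of_loc (zmod_hloc p k hpp hk) M
  | zero => intro h; exact absurd h (lt_irrefl 0)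
  | one =>
      intro _ M
      have : M = 1 := Subtype.ext (Subsingleton.elim _ _)
      rw [this]; exact one_mem _
  | coprime a b ha hb hab iha ihb =>
      intro _ M
      have ha' : 0 < a := lt_trans one_pos ha
      have hb' : 0 < b := lt_trans one_pos hb
      set f₁ := ZMod.castHom (dvd_mul_right a b) (ZMod a) with hf₁
      set f₂ := ZMod.castHom (dvd_mul_left b a) (ZMod b) with hf₂
      have hM1 := iha ha' (sympMap f₁ M)
      have hM2 := ihb hb' (sympMap f₂ M)
      obtain ⟨P, hP, hP1, hP2⟩ := closure_lift f₁ f₂ (fun x => by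
        obtain ⟨r, h1, h2⟩ := crt_pair_surj ha' hb' hab x 0
        exact ⟨r, h1, h2⟩) _ hM1
      obtain ⟨Q, hQ, hQ2, hQ1⟩ := closure_lift f₂ f₁ (fun x => by
        obtain ⟨r, h1, h2⟩ := crt_pair_surj ha' hb' hab 0 x
        exact ⟨r, h2, h1⟩) _ hM2
      have e1 : sympMap f₁ (P * Q) = sympMap f₁ M := by
        rw [_root_.map_mul, hP1, hQ1, mul_one]
      have e2 : sympMap f₂ (P * Q) = sympMap f₂ M := by
        rw [_root_.map_mul, hP2, hQ2, one_mul]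
      have m1 : ((P * Q : Matrix.symplecticGroup l (ZMod (a * b))) :
          Matrix (l ⊕ l) (l ⊕ l) (ZMod (a * b))).map f₁ =
          (M : Matrix (l ⊕ l) (l ⊕ l) (ZMod (a * b))).map f₁ := congrArg Subtype.val e1
      have m2 : ((P * Q : Matrix.symplecticGroup l (ZMod (a * b))) :
          Matrix (l ⊕ l) (l ⊕ l) (ZMod (a * b))).map f₂ =
          (M : Matrix (l ⊕ l) (l ⊕ l) (ZMod (a * b))).map f₂ := congrArg Subtype.val e2
      have hPQ : P * Q = M := by
        apply Subtype.ext
        ext i j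
        apply crt_inj ha' hb' hab
        · exact congrFun (congrFun m1 i) j
        · exact congrFun (congrFun m2 i) j
      rw [← hPQ]
      exact mul_mem hP hQ

end SpAux

/-- For every `n ≥ 1` and `m ≥ 1`, the entrywise reduction homomorphism
`Sp(2n,ℤ) → Sp(2n, ℤ/mℤ)` is surjective. -/
theorem symplecticGroup_reduction_surjective (n m : ℕ) (hn : 1 ≤ n) (hm : 1 ≤ m) :
    Function.Surjective
      (sympMap (Int.castRingHom (ZMod m)) :
        Matrix.symplecticGroup (Fin n) ℤ →* Matrix.symplecticGroup (Fin n) (ZMod m)) := by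
  intro M
  have hgen := SpAux.gen_zmod m hm M
  have hle : Subgroup.closure (SpAux.TvSet (Fin n) (ZMod m)) ≤
      (sympMap (Int.castRingHom (ZMod m)) :
        Matrix.symplecticGroup (Fin n) ℤ →* Matrix.symplecticGroup (Fin n) (ZMod m)).range := by
    rw [Subgroup.closure_le]
    rintro x ⟨⟨v, c⟩, rfl⟩
    choose vt hvt using fun a => ZMod.intCast_surjective (v a)
    obtain ⟨c', hc'⟩ := ZMod.intCast_surjective c
    refine ⟨SpAux.sympTv vt c', ?_⟩
    rw [SpAux.sympMap_sympTv]
    have h1 : (fun a => (Int.castRingHom (ZMod m)) (vt a)) = v := funext fun a => hvt a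
    have h2 : (Int.castRingHom (ZMod m)) c' = c := hc'
    rw [h1, h2]
  obtain ⟨N, hN⟩ := hle hgen
  exact ⟨N, hN⟩
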